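/- Let p ∈ ℂ[z₁,z₂] be pure stable with p(0,0) = 0 and order of vanishing M at (0,0). Then the lowest order homogeneous term of p has the form P_M(z₁,z₂) = c·∏_{j=1}^{M}(z₂ + a_j z₁) where c ∈ ℂ ∖ {0} and each a_j is a strictly positive real number. In particular P_M has no factors of z₁ or of z₂. -/

import Mathlib

open Polynomial Complex Filter Real Topology

noncomputable def Complex.abs : AbsoluteValue ℂ ℝ :=
  IsAbsoluteValue.toAbsoluteValue (norm : ℂ → ℝ)

lemma Complex.abs_apply (z : ℂ) : Complex.abs z = ‖z‖ := rfl

lemma Complex.continuous_abs : Continuous Complex.abs := continuous_norm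

lemma Complex.abs_mul_exp_arg_mul_I (w : ℂ) :
    ↑(Complex.abs w) * Complex.exp (↑w.arg * Complex.I) = w :=
  Complex.norm_mul_exp_arg_mul_I w

noncomputable def edgePoly (p : MvPolynomial (Fin 2) ℂ) (s N : ℝ) : Polynomial ℂ :=
  ∑ d ∈ p.support.filter (fun d => (d 0 : ℝ) + s * (d 1 : ℝ) = N),
    Polynomial.C (MvPolynomial.coeff d p) * Polynomial.X ^ (d 1)

lemma edgePoly_eval (p : MvPolynomial (Fin 2) ℂ) (s N : ℝ) (w : ℂ) :
    (edgePoly p s N).eval w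
      = ∑ d ∈ p.support.filter (fun d => (d 0 : ℝ) + s * (d 1 : ℝ) = N),
          MvPolynomial.coeff d p * w ^ (d 1) := by
  simp [edgePoly, Polynomial.eval_finset_sum]

lemma fin2_finsupp_eq {d d' : Fin 2 →₀ ℕ} (h0 : d 0 = d' 0) (h1 : d 1 = d' 1) : d = d' := by
  ext i; fin_cases i <;> assumption

lemma edgePoly_coeff_of_mem {p : MvPolynomial (Fin 2) ℂ} {s N : ℝ} {d : Fin 2 →₀ ℕ}
    (hd : d ∈ p.support) (hdeq : (d 0 : ℝ) + s * (d 1 : ℝ) = N) :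
    (edgePoly p s N).coeff (d 1) = MvPolynomial.coeff d p := by
  rw [edgePoly, Polynomial.finset_sum_coeff]
  rw [Finset.sum_eq_single d]
  · simp
  · intro d' hd' hne
    simp only [Finset.mem_filter] at hd'
    rw [Polynomial.coeff_C_mul, Polynomial.coeff_X_pow]
    rw [if_neg, mul_zero]
    intro h
    apply hne
    apply fin2_finsupp_eq _ h.symm
    have : (d' 0 : ℝ) = (d 0 : ℝ) := by
      have h1 := hd'.2
      rw [← h] at h1
      linarith [hdeq]
    exact_mod_cast this
  · intro h
    exact absurd (Finset.mem_filter.mpr ⟨hd, hdeq⟩) h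

lemma edgePoly_ne_zero {p : MvPolynomial (Fin 2) ℂ} {s N : ℝ} {d : Fin 2 →₀ ℕ}
    (hd : d ∈ p.support) (hdeq : (d 0 : ℝ) + s * (d 1 : ℝ) = N) :
    edgePoly p s N ≠ 0 := by
  intro h
  have := edgePoly_coeff_of_mem hd hdeq
  rw [h] at this
  simp only [Polynomial.coeff_zero] at this
  exact (MvPolynomial.mem_support_iff.mp hd) this.symm

lemma poly_bound (G : Polynomial ℂ) (v z : ℂ) (ρ : ℝ) (hρ : 0 < ρ)
    (h : ∀ r ∈ G.roots, ρ ≤ Complex.abs (v - r)) :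
    Complex.abs (G.eval z) ≤
      (1 + Complex.abs (z - v) / ρ) ^ G.natDegree * Complex.abs (G.eval v) := by
  by_cases hG : G = 0
  · simp [hG]
  set b : ℝ := 1 + Complex.abs (z - v) / ρ with hb
  have hb1 : (1:ℝ) ≤ b := le_add_of_nonneg_right (by positivity)
  have hfac := (IsAlgClosed.splits G).eq_prod_roots
  have habs : ∀ x : ℂ, Complex.abs (G.eval x)
      = Complex.abs G.leadingCoeff * (G.roots.map (fun a => Complex.abs (x - a))).prod := by
    intro x
    conv_lhs => rw [hfac]
    rw [eval_mul, eval_C, map_mul, eval_multiset_prod]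
    rw [Multiset.map_map]
    rw [show (Multiset.map ((eval x) ∘ fun a => X - C a) G.roots) = Multiset.map (fun a => x - a) G.roots from Multiset.map_congr rfl (by intros; simp)]
    congr 1
    induction (G.roots) using Multiset.induction_on with
    | empty => simp
    | cons a s ih => simp only [Multiset.map_cons, Multiset.prod_cons, map_mul, ih]
  rw [habs z, habs v]
  have key : (G.roots.map (fun a => Complex.abs (z - a))).prod
      ≤ b ^ Multiset.card G.roots * (G.roots.map (fun a => Complex.abs (v - a))).prod := by
    have h1 : (G.roots.map (fun a => Complex.abs (z - a))).prod
        ≤ (G.roots.map (fun a => b * Complex.abs (v - a))).prod := by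
      apply Multiset.prod_map_le_prod_map₀
      · intro i _; positivity
      · intro i hi
        have h2 : ρ ≤ Complex.abs (v - i) := h i hi
        have : Complex.abs (z - i) ≤ Complex.abs (z - v) + Complex.abs (v - i) := by
          simpa using Complex.abs.sub_le z v i
        have h3 : Complex.abs (z - v) ≤ Complex.abs (z - v) / ρ * Complex.abs (v - i) := by
          rw [div_mul_eq_mul_div, le_div_iff₀ hρ]
          exact mul_le_mul_of_nonneg_left h2 (by positivity)
        calc Complex.abs (z - i) ≤ Complex.abs (z - v) + Complex.abs (v - i) := this
          _ ≤ Complex.abs (z - v) / ρ * Complex.abs (v - i) + 1 * Complex.abs (v - i) := by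
              rw [one_mul]; exact add_le_add h3 le_rfl
          _ = b * Complex.abs (v - i) := by ring
    calc _ ≤ _ := h1
      _ = b ^ Multiset.card G.roots * (G.roots.map (fun a => Complex.abs (v - a))).prod := by
          rw [Multiset.prod_map_mul]
          congr 1
          simp [Multiset.map_const', Multiset.prod_replicate]
  have hcard : Multiset.card G.roots ≤ G.natDegree := G.card_roots'
  have hprodnn : (0:ℝ) ≤ (G.roots.map (fun a => Complex.abs (v - a))).prod :=
    Multiset.prod_nonneg (by intro x hx; simp only [Multiset.mem_map] at hx; obtain ⟨a,_,rfl⟩ := hx; positivity)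
  have h4 : b ^ Multiset.card G.roots * (G.roots.map (fun a => Complex.abs (v - a))).prod
      ≤ b ^ G.natDegree * (G.roots.map (fun a => Complex.abs (v - a))).prod :=
    mul_le_mul_of_nonneg_right (pow_le_pow_right₀ hb1 hcard) hprodnn
  calc Complex.abs G.leadingCoeff * (G.roots.map (fun a => Complex.abs (z - a))).prod
      ≤ Complex.abs G.leadingCoeff * (b ^ Multiset.card G.roots * (G.roots.map (fun a => Complex.abs (v - a))).prod) :=
        mul_le_mul_of_nonneg_left key (by positivity)
    _ ≤ Complex.abs G.leadingCoeff * (b ^ G.natDegree * (G.roots.map (fun a => Complex.abs (v - a))).prod) :=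
        mul_le_mul_of_nonneg_left h4 (by positivity)
    _ = b ^ G.natDegree * (Complex.abs G.leadingCoeff * (G.roots.map (fun a => Complex.abs (v - a))).prod) := by ring

lemma rpow_tendsto_zero {x : ℝ} (hx : 0 < x) :
    Tendsto (fun r : ℝ => r ^ x) (𝓝[>] (0:ℝ)) (𝓝 0) := by
  have : ∀ r ∈ Set.Ioi (0:ℝ), Real.exp (x * Real.log r) = r ^ x := by
    intro r hr
    rw [Real.rpow_def_of_pos hr, mul_comm]
  apply Tendsto.congr' (eventuallyEq_nhdsWithin_of_eqOn this)
  exact Real.tendsto_exp_atBot.comp (Real.tendsto_log_nhdsGT_zero.const_mul_atBot hx)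

lemma master (p : MvPolynomial (Fin 2) ℂ)
    (hstable : ∀ z : Fin 2 → ℂ, (∀ i, 0 < (z i).im) → MvPolynomial.eval z p ≠ 0)
    (s N : ℝ)
    (hsupp : ∀ d ∈ p.support, N ≤ (d 0 : ℝ) + s * (d 1 : ℝ))
    (θ : ℝ) (hθ : 0 < θ) (hθπ : θ < π)
    (w₀ : ℂ) (hw : 0 < (Complex.exp (↑(s*θ) * Complex.I) * w₀).im)
    (hroot : (edgePoly p s N).eval w₀ = 0)
    (hnz : edgePoly p s N ≠ 0) : False := by
  classical
  set e := edgePoly p s N with he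
  set cθ : ℂ := Complex.exp (↑θ * Complex.I) with hcθ
  set cs : ℂ := Complex.exp (↑(s*θ) * Complex.I) with hcs
  have hcs_ne : cs ≠ 0 := Complex.exp_ne_zero _
  set W : Set ℂ := {w : ℂ | 0 < (cs * w).im} with hWdef
  have hWopen : IsOpen W :=
    isOpen_lt continuous_const (Complex.continuous_im.comp (continuous_const.mul continuous_id))
  have hw₀W : w₀ ∈ W := hw
  have h0Wc : (0:ℂ) ∈ Wᶜ := by simp [hWdef]
  set ρ : ℝ := Metric.infDist w₀ Wᶜ with hρdef
  have hρ : 0 < ρ := by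
    rw [hρdef]
    rw [← (hWopen.isClosed_compl.notMem_iff_infDist_pos ⟨0, h0Wc⟩)]
    simpa using hw₀W
  -- choose z* in W with e.eval z* ≠ 0
  set c₀ : ℂ := cs⁻¹ * Complex.I with hc₀
  have hc₀ne : c₀ ≠ 0 := mul_ne_zero (inv_ne_zero hcs_ne) Complex.I_ne_zero
  have hbadfin : {u : ℝ | Polynomial.eval (c₀ * ↑u) e = 0}.Finite := by
    have hfin : {x : ℂ | Polynomial.IsRoot e x}.Finite := Polynomial.finite_setOf_isRoot hnz
    apply Set.Finite.preimage _ hfin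
    intro u _ v _ huv
    have : (u : ℂ) = (v : ℂ) := mul_left_cancel₀ hc₀ne huv
    exact_mod_cast this
  obtain ⟨u, hu⟩ : ((Set.Ioi (0:ℝ)) \ {u : ℝ | Polynomial.eval (c₀ * ↑u) e = 0}).Nonempty :=
    ((Set.Ioi_infinite 0).diff hbadfin).nonempty
  set zst : ℂ := c₀ * ↑u with hzst
  have hzstW : zst ∈ W := by
    simp only [hWdef, Set.mem_setOf_eq, hzst, hc₀]
    have : cs * (cs⁻¹ * Complex.I * ↑u) = Complex.I * ↑u := by
      field_simp
    rw [this]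
    simp only [Complex.mul_im, Complex.I_re, Complex.I_im, Complex.ofReal_re,
      Complex.ofReal_im, zero_mul, one_mul, mul_zero, add_zero, zero_add]
    exact hu.1
  have hezst : e.eval zst ≠ 0 := hu.2
  set D := p.totalDegree with hD
  set K : ℝ := (1 + Complex.abs (zst - w₀) / ρ) ^ D with hK
  have hbase1 : (1:ℝ) ≤ 1 + Complex.abs (zst - w₀) / ρ := le_add_of_nonneg_right (by positivity)
  -- the family
  set G : ℝ → Polynomial ℂ := fun r =>
    ∑ d ∈ p.support, Polynomial.C (MvPolynomial.coeff d p * (↑r * cθ) ^ (d 0)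
      * ((↑(r ^ s) : ℂ) * cs) ^ (d 1)) * Polynomial.X ^ (d 1) with hG
  have heval : ∀ r w, (G r).eval w = ∑ d ∈ p.support,
      MvPolynomial.coeff d p * (↑r * cθ) ^ (d 0) * ((↑(r ^ s) : ℂ) * cs) ^ (d 1) * w ^ (d 1) := by
    intro r w
    rw [hG, Polynomial.eval_finset_sum]
    simp
  have hevalMv : ∀ r w, (G r).eval w
      = MvPolynomial.eval (fun j : Fin 2 => if j = 0 then (↑r * cθ : ℂ)
          else (↑(r ^ s) : ℂ) * cs * w) p := by
    intro r w
    rw [heval, MvPolynomial.eval_eq']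
    apply Finset.sum_congr rfl
    intro d _
    rw [Fin.prod_univ_two]
    norm_num
    rw [mul_pow ((↑(r ^ s) : ℂ) * cs) w]
    ring
  have hdeg : ∀ r, (G r).natDegree ≤ D := by
    intro r
    rw [hG]
    apply Polynomial.natDegree_sum_le_of_forall_le
    intro d hd
    apply le_trans (Polynomial.natDegree_C_mul_le _ _)
    rw [Polynomial.natDegree_X_pow]
    have : d 1 ≤ d 0 + d 1 := Nat.le_add_left _ _
    apply le_trans this
    have hs := MvPolynomial.le_totalDegree hd
    rw [show (d.sum fun _ e => e) = d 0 + d 1 from ?_] at hs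
    · exact hs
    · rw [Finsupp.sum_fintype]
      · exact Fin.sum_univ_two d
      · intro; rfl
  -- roots of G r avoid W
  have hroots : ∀ r : ℝ, 0 < r → ∀ x ∈ (G r).roots, x ∈ Wᶜ := by
    intro r hr x hx hxW
    have hxroot : (G r).eval x = 0 := (Polynomial.mem_roots'.mp hx).2
    rw [hevalMv r x] at hxroot
    apply hstable _ _ hxroot
    intro i
    by_cases hi : i = 0
    · rw [if_pos hi]
      rw [show ((↑r : ℂ) * cθ).im = r * cθ.im from by
        simp [Complex.mul_im]]
      rw [hcθ, Complex.exp_ofReal_mul_I_im]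
      exact mul_pos hr (Real.sin_pos_of_pos_of_lt_pi hθ hθπ)
    · rw [if_neg hi]
      rw [mul_assoc]
      rw [show ((↑(r ^ s) : ℂ) * (cs * x)).im = r ^ s * (cs * x).im from by
        simp [Complex.mul_im]]
      exact mul_pos (Real.rpow_pos_of_pos hr s) hxW
  -- the limit
  have hlim : ∀ w : ℂ, Tendsto (fun r : ℝ => (G r).eval w * ((↑(r ^ (-N)) : ℂ)))
      (𝓝[>] (0:ℝ)) (𝓝 (Complex.exp (↑(N*θ) * Complex.I) * e.eval w)) := by
    intro w
    have hterm : ∀ d ∈ p.support, Tendsto (fun r : ℝ =>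
        MvPolynomial.coeff d p * (↑r * cθ) ^ (d 0) * ((↑(r ^ s) : ℂ) * cs) ^ (d 1) * w ^ (d 1)
          * ((↑(r ^ (-N)) : ℂ)))
        (𝓝[>] (0:ℝ))
        (𝓝 (if (d 0 : ℝ) + s * (d 1 : ℝ) = N then
          MvPolynomial.coeff d p * cθ ^ (d 0) * cs ^ (d 1) * w ^ (d 1) else 0)) := by
      intro d hd
      set A : ℂ := MvPolynomial.coeff d p * cθ ^ (d 0) * cs ^ (d 1) * w ^ (d 1) with hA
      set x : ℝ := (d 0 : ℝ) + s * (d 1 : ℝ) - N with hx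
      have hx0 : 0 ≤ x := by
        have := hsupp d hd
        rw [hx]; linarith
      have hfun : ∀ r ∈ Set.Ioi (0:ℝ),
          A * ((↑(r ^ x) : ℂ)) =
          MvPolynomial.coeff d p * (↑r * cθ) ^ (d 0) * ((↑(r ^ s) : ℂ) * cs) ^ (d 1) * w ^ (d 1)
            * ((↑(r ^ (-N)) : ℂ)) := by
        intro r hr
        have hr' : (0:ℝ) < r := hr
        have hreal : r ^ x = r ^ (d 0 : ℕ) * (r ^ s) ^ (d 1 : ℕ) * r ^ (-N) := by
          rw [← Real.rpow_natCast r (d 0), ← Real.rpow_natCast (r ^ s) (d 1),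
            ← Real.rpow_mul hr'.le, ← Real.rpow_add hr', ← Real.rpow_add hr']
          rw [hx]
          ring_nf
        rw [hreal, hA]
        push_cast
        ring
      apply Tendsto.congr' (eventuallyEq_nhdsWithin_of_eqOn hfun)
      by_cases hcond : (d 0 : ℝ) + s * (d 1 : ℝ) = N
      · have hx00 : x = 0 := by rw [hx]; linarith
        rw [if_pos hcond]
        have : ∀ r : ℝ, A * ((↑(r ^ x) : ℂ)) = A := by
          intro r; rw [hx00, Real.rpow_zero]; simp
        simp_rw [this]
        exact tendsto_const_nhds
      · rw [if_neg hcond]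
        have hxpos : 0 < x := lt_of_le_of_ne hx0 (by
          intro h
          apply hcond
          rw [hx] at h; linarith)
        have h1 : Tendsto (fun r : ℝ => ((↑(r ^ x) : ℂ))) (𝓝[>] (0:ℝ)) (𝓝 0) := by
          have := (Complex.continuous_ofReal.tendsto 0).comp (rpow_tendsto_zero hxpos)
          simpa [Function.comp_def] using this
        simpa using h1.const_mul A
    have hsum := tendsto_finset_sum p.support hterm
    have hfun : (fun r : ℝ => (G r).eval w * ((↑(r ^ (-N)) : ℂ)))
        = fun r : ℝ => ∑ d ∈ p.support,
          MvPolynomial.coeff d p * (↑r * cθ) ^ (d 0) * ((↑(r ^ s) : ℂ) * cs) ^ (d 1) * w ^ (d 1)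
            * ((↑(r ^ (-N)) : ℂ)) := by
      funext r
      rw [heval, Finset.sum_mul]
    rw [hfun]
    have hval : Complex.exp (↑(N*θ) * Complex.I) * e.eval w
        = ∑ d ∈ p.support, (if (d 0 : ℝ) + s * (d 1 : ℝ) = N then
          MvPolynomial.coeff d p * cθ ^ (d 0) * cs ^ (d 1) * w ^ (d 1) else 0) := by
      rw [← Finset.sum_filter]
      rw [he, edgePoly_eval, Finset.mul_sum]
      apply Finset.sum_congr rfl
      intro d hd
      simp only [Finset.mem_filter] at hd
      have hphase : cθ ^ (d 0) * cs ^ (d 1) = Complex.exp (↑(N*θ) * Complex.I) := by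
        rw [hcθ, hcs, ← Complex.exp_nat_mul, ← Complex.exp_nat_mul, ← Complex.exp_add]
        congr 1
        have : ((d 0 : ℝ) + s * (d 1 : ℝ)) * θ = N * θ := by rw [hd.2]
        calc (↑(d 0) : ℂ) * (↑θ * Complex.I) + ↑(d 1) * (↑(s*θ) * Complex.I)
            = ↑(((d 0 : ℝ) + s * (d 1 : ℝ)) * θ) * Complex.I := by push_cast; ring
          _ = ↑(N * θ) * Complex.I := by rw [this]
      rw [← hphase]
      ring
    rw [hval]
    exact hsum
  -- put it together
  have hineq : ∀ᶠ r in 𝓝[>] (0:ℝ),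
      Complex.abs ((G r).eval zst * ((↑(r ^ (-N)) : ℂ)))
        ≤ K * Complex.abs ((G r).eval w₀ * ((↑(r ^ (-N)) : ℂ))) := by
    apply eventually_nhdsWithin_of_forall
    intro r hr
    have hr' : (0:ℝ) < r := hr
    have hb := poly_bound (G r) w₀ zst ρ hρ (fun x hx => by
      have hmem := hroots r hr' x hx
      have hdist : ρ ≤ dist w₀ x := Metric.infDist_le_dist_of_mem hmem
      rwa [Complex.dist_eq] at hdist)
    have hKb : (1 + Complex.abs (zst - w₀) / ρ) ^ (G r).natDegree ≤ K := by
      rw [hK]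
      exact pow_le_pow_right₀ hbase1 (hdeg r)
    rw [map_mul, map_mul]
    have h2 : Complex.abs ((G r).eval zst) ≤ K * Complex.abs ((G r).eval w₀) :=
      le_trans hb (mul_le_mul_of_nonneg_right hKb (by positivity))
    calc Complex.abs ((G r).eval zst) * Complex.abs ((↑(r ^ (-N)) : ℂ))
        ≤ K * Complex.abs ((G r).eval w₀) * Complex.abs ((↑(r ^ (-N)) : ℂ)) :=
          mul_le_mul_of_nonneg_right h2 (by positivity)
      _ = K * (Complex.abs ((G r).eval w₀) * Complex.abs ((↑(r ^ (-N)) : ℂ))) := by ring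
  have habs_z : Tendsto (fun r : ℝ => Complex.abs ((G r).eval zst * ((↑(r ^ (-N)) : ℂ))))
      (𝓝[>] (0:ℝ)) (𝓝 (Complex.abs (Complex.exp (↑(N*θ) * Complex.I) * e.eval zst))) :=
    (Complex.continuous_abs.tendsto _).comp (hlim zst)
  have habs_w : Tendsto (fun r : ℝ => K * Complex.abs ((G r).eval w₀ * ((↑(r ^ (-N)) : ℂ))))
      (𝓝[>] (0:ℝ)) (𝓝 (K * Complex.abs (Complex.exp (↑(N*θ) * Complex.I) * e.eval w₀))) :=
    ((Complex.continuous_abs.tendsto _).comp (hlim w₀)).const_mul K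
  have hle := le_of_tendsto_of_tendsto habs_z habs_w hineq
  rw [hroot, mul_zero, map_zero, mul_zero] at hle
  have : Complex.abs (Complex.exp (↑(N*θ) * Complex.I) * e.eval zst) > 0 := by
    rw [map_mul]
    exact mul_pos (AbsoluteValue.pos _ (Complex.exp_ne_zero _)) (AbsoluteValue.pos _ hezst)
  linarith

lemma exists_sin_pos {a b : ℝ} (ha : -π < a) (ha' : a ≤ π) (hab : a + π ≤ b)
    (h2 : a < π ∨ a + π < b) : ∃ x, a < x ∧ x < b ∧ 0 < Real.sin x := by
  have hπ : (0:ℝ) < π := Real.pi_pos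
  by_cases hcase : a < π
  · refine ⟨(max a 0 + min b π) / 2, ?_, ?_, ?_⟩
    · have h1 : a ≤ max a 0 := le_max_left _ _
      have h2 : a < min b π := lt_min (by linarith) hcase
      linarith
    · have h1 : max a 0 < b := max_lt (by linarith) (by linarith)
      have h2 : min b π ≤ b := min_le_left _ _
      linarith
    · apply Real.sin_pos_of_pos_of_lt_pi
      · have h1 : (0:ℝ) ≤ max a 0 := le_max_right _ _
        have h2 : 0 < min b π := lt_min (by linarith) hπ
        linarith
      · have h1 : max a 0 < π := max_lt hcase hπ
        have h2 : min b π ≤ π := min_le_right _ _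
        linarith
  · -- a = π
    have haπ : a = π := le_antisymm ha' (not_lt.mp hcase)
    have hb2 : 2 * π < b := by
      rcases h2 with h | h
      · exact absurd h hcase
      · linarith
    refine ⟨(2*π + min b (3*π)) / 2, ?_, ?_, ?_⟩
    · have : 2*π < min b (3*π) := lt_min hb2 (by linarith)
      linarith
    · have h1 : min b (3*π) ≤ b := min_le_left _ _
      linarith
    · have hx1 : 2*π < (2*π + min b (3*π)) / 2 := by
        have : 2*π < min b (3*π) := lt_min hb2 (by linarith); linarith
      have hx2 : (2*π + min b (3*π)) / 2 < 3*π := by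
        have : min b (3*π) ≤ 3*π := min_le_right _ _; linarith
      have : Real.sin ((2*π + min b (3*π)) / 2) = Real.sin ((2*π + min b (3*π)) / 2 - 2*π) := by
        rw [Real.sin_sub_two_pi]
      rw [this]
      apply Real.sin_pos_of_pos_of_lt_pi <;> linarith

lemma im_exp_mul (t : ℝ) (w : ℂ) (hw : w ≠ 0) :
    (Complex.exp (↑t * Complex.I) * w).im = Complex.abs w * Real.sin (t + w.arg) := by
  conv_lhs => rw [← Complex.abs_mul_exp_arg_mul_I w]
  rw [← mul_assoc, mul_comm (Complex.exp (↑t * Complex.I)) _, mul_assoc,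
    ← Complex.exp_add]
  have : (↑t * Complex.I + ↑w.arg * Complex.I) = ↑(t + w.arg) * Complex.I := by
    push_cast; ring
  rw [this]
  rw [show ((↑(Complex.abs w) : ℂ) * Complex.exp (↑(t + w.arg) * Complex.I)).im
      = Complex.abs w * (Complex.exp (↑(t + w.arg) * Complex.I)).im from by
    simp [Complex.mul_im]]
  rw [Complex.exp_ofReal_mul_I_im]

/-- From a root of the edge polynomial with suitable constraint, contradiction. -/
lemma master_root (p : MvPolynomial (Fin 2) ℂ)
    (hstable : ∀ z : Fin 2 → ℂ, (∀ i, 0 < (z i).im) → MvPolynomial.eval z p ≠ 0)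
    (s N : ℝ) (hs : 1 ≤ s)
    (hsupp : ∀ d ∈ p.support, N ≤ (d 0 : ℝ) + s * (d 1 : ℝ))
    (w₀ : ℂ) (hw₀ : w₀ ≠ 0)
    (hcase : w₀.arg < π ∨ 1 < s)
    (hroot : (edgePoly p s N).eval w₀ = 0)
    (hnz : edgePoly p s N ≠ 0) : False := by
  have hπ := Real.pi_pos
  have hs0 : 0 < s := lt_of_lt_of_le one_pos hs
  set a := w₀.arg with hadef
  have ha : -π < a := Complex.neg_pi_lt_arg w₀
  have ha' : a ≤ π := Complex.arg_le_pi w₀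
  have hab : a + π ≤ a + s * π := by nlinarith
  have h2 : a < π ∨ a + π < a + s * π := by
    rcases hcase with h | h
    · exact Or.inl h
    · right; nlinarith
  obtain ⟨x, hx1, hx2, hsin⟩ := exists_sin_pos ha ha' hab h2
  set θ := (x - a) / s with hθdef
  have hθ : 0 < θ := div_pos (by linarith) hs0
  have hθπ : θ < π := by
    rw [hθdef, div_lt_iff₀ hs0]
    nlinarith
  have hsθ : s * θ = x - a := by
    rw [hθdef]; field_simp
  have hw : 0 < (Complex.exp (↑(s*θ) * Complex.I) * w₀).im := by
    rw [im_exp_mul _ _ hw₀, hsθ]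
    have : x - a + w₀.arg = x := by rw [← hadef]; ring
    rw [this]
    exact mul_pos (AbsoluteValue.pos _ hw₀) hsin
  exact master p hstable s N hsupp θ hθ hθπ w₀ hw hroot hnz

lemma fin2_degree (d : Fin 2 →₀ ℕ) : d.degree = d 0 + d 1 := by
  rw [Finsupp.degree_apply, Finset.sum_subset (Finset.subset_univ _)]
  · exact Fin.sum_univ_two d
  · intro i _ hi; exact Finsupp.notMem_support_iff.mp hi

/-- Key helper: the pure lowest-order axis coefficient is nonzero. -/
lemma helperA (p : MvPolynomial (Fin 2) ℂ) (M : ℕ)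
    (hstable : ∀ z : Fin 2 → ℂ, (∀ i, 0 < (z i).im) → MvPolynomial.eval z p ≠ 0)
    (hlow : ∀ d ∈ p.support, M ≤ d 0 + d 1)
    (hMwit : ∃ d ∈ p.support, d 0 + d 1 = M)
    (hax : ∃ d ∈ p.support, d 1 = 0) :
    (Finsupp.single (0 : Fin 2) M) ∈ p.support := by
  classical
  obtain ⟨da, hda, hda1⟩ := hax
  have haxne : (p.support.filter (fun d => d 1 = 0)).Nonempty :=
    ⟨da, Finset.mem_filter.mpr ⟨hda, hda1⟩⟩
  obtain ⟨dN, hdN, hdNmin⟩ :=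
    Finset.exists_min_image (p.support.filter (fun d => d 1 = 0)) (fun d => d 0) haxne
  have hdNsupp : dN ∈ p.support := (Finset.mem_filter.mp hdN).1
  have hdN1 : dN 1 = 0 := (Finset.mem_filter.mp hdN).2
  set N := dN 0 with hNdef
  have hMN : M ≤ N := by
    have := hlow dN hdNsupp
    omega
  have hNM : N ≤ M := by
    by_contra hcon
    push_neg at hcon
    obtain ⟨dM, hdM, hdMsum⟩ := hMwit
    have hdM1 : dM 1 ≠ 0 := by
      intro h
      have := hdNmin dM (Finset.mem_filter.mpr ⟨hdM, h⟩)
      omega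
    have hSne : (p.support.filter (fun d => d 1 ≠ 0)).Nonempty :=
      ⟨dM, Finset.mem_filter.mpr ⟨hdM, hdM1⟩⟩
    obtain ⟨ds, hds, hdsmax⟩ :=
      Finset.exists_max_image (p.support.filter (fun d => d 1 ≠ 0))
        (fun d => ((N : ℝ) - d 0) / (d 1)) hSne
    have hdssupp : ds ∈ p.support := (Finset.mem_filter.mp hds).1
    have hds1 : ds 1 ≠ 0 := (Finset.mem_filter.mp hds).2
    have hds1pos : (0:ℝ) < (ds 1 : ℝ) := by exact_mod_cast Nat.pos_of_ne_zero hds1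
    set s : ℝ := ((N : ℝ) - ds 0) / (ds 1) with hsdef
    have hdM1pos : (0:ℝ) < (dM 1 : ℝ) := by exact_mod_cast Nat.pos_of_ne_zero hdM1
    have hs1 : 1 < s := by
      have h1 : ((N : ℝ) - dM 0) / (dM 1) ≤ s := hdsmax dM (Finset.mem_filter.mpr ⟨hdM, hdM1⟩)
      have h2 : 1 < ((N : ℝ) - dM 0) / (dM 1) := by
        rw [lt_div_iff₀ hdM1pos]
        have h3 : dM 0 + dM 1 < N := by omega
        have h4 : (dM 0 : ℝ) + (dM 1 : ℝ) < (N : ℝ) := by exact_mod_cast h3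
        linarith
      linarith
    have hsupp : ∀ d ∈ p.support, (N:ℝ) ≤ (d 0 : ℝ) + s * (d 1 : ℝ) := by
      intro d hdsup
      by_cases h : d 1 = 0
      · have := hdNmin d (Finset.mem_filter.mpr ⟨hdsup, h⟩)
        rw [h]
        push_cast
        simp only [mul_zero, add_zero]
        exact_mod_cast this
      · have hd1pos : (0:ℝ) < (d 1 : ℝ) := by exact_mod_cast Nat.pos_of_ne_zero h
        have := hdsmax d (Finset.mem_filter.mpr ⟨hdsup, h⟩)
        rw [div_le_iff₀ hd1pos] at this
        linarith
    have hedge_s : (ds 0 : ℝ) + s * (ds 1 : ℝ) = N := by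
      rw [hsdef]
      field_simp
      ring
    have hedge0 : (dN 0 : ℝ) + s * (dN 1 : ℝ) = N := by
      rw [hdN1, hNdef]
      push_cast
      ring
    have hnz : edgePoly p s N ≠ 0 := edgePoly_ne_zero hdNsupp hedge0
    -- degree positive
    have hcoeffs : (edgePoly p s N).coeff (ds 1) ≠ 0 := by
      rw [edgePoly_coeff_of_mem hdssupp hedge_s]
      exact MvPolynomial.mem_support_iff.mp hdssupp
    have hdegpos : 0 < (edgePoly p s N).degree := by
      have h1 : ds 1 ≤ (edgePoly p s N).natDegree := Polynomial.le_natDegree_of_ne_zero hcoeffs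
      have : 0 < (edgePoly p s N).natDegree := lt_of_lt_of_le (Nat.pos_of_ne_zero hds1) h1
      exact Polynomial.natDegree_pos_iff_degree_pos.mp this
    obtain ⟨w₀, hw₀⟩ := Complex.exists_root hdegpos
    have hw₀ne : w₀ ≠ 0 := by
      intro h
      rw [h] at hw₀
      have : (edgePoly p s N).coeff 0 ≠ 0 := by
        have := edgePoly_coeff_of_mem hdNsupp hedge0
        rw [hdN1] at this
        rw [this]
        exact MvPolynomial.mem_support_iff.mp hdNsupp
      rw [Polynomial.coeff_zero_eq_eval_zero] at this
      exact this hw₀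
    exact master_root p hstable s N hs1.le hsupp w₀ hw₀ne (Or.inr hs1) hw₀ hnz
  have hNMeq : N = M := le_antisymm hNM hMN
  have : dN = Finsupp.single (0 : Fin 2) M := by
    apply fin2_finsupp_eq
    · rw [Finsupp.single_eq_same, ← hNMeq]
    · rw [hdN1, Finsupp.single_eq_of_ne]
      decide
  rwa [← this]

lemma not_isUnit_X (i : Fin 2) : ¬ IsUnit (MvPolynomial.X i : MvPolynomial (Fin 2) ℂ) := by
  intro h
  obtain ⟨q, hq⟩ := h.exists_right_inv
  have := congrArg MvPolynomial.constantCoeff hq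
  simp only [map_mul, MvPolynomial.constantCoeff_X, zero_mul, map_one] at this
  exact zero_ne_one this

lemma X_dvd_of_support {p : MvPolynomial (Fin 2) ℂ} {i : Fin 2}
    (h : ∀ d ∈ p.support, d i ≠ 0) : MvPolynomial.X i ∣ p := by
  conv_rhs => rw [← MvPolynomial.support_sum_monomial_coeff p]
  apply Finset.dvd_sum
  intro d hd
  rw [MvPolynomial.X_dvd_monomial]
  exact Or.inr (h d hd)

/-- **Corollary (lowest homogeneous term of a pure stable polynomial in two
variables).**  Let `p ∈ ℂ[z₁,z₂]` be pure stable with `p(0,0) = 0` and order of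
vanishing `M` at `(0,0)`.  Then the lowest order homogeneous term has the form
`P_M(z₁,z₂) = c ∏_{j=1}^M (z₂ + a_j z₁)` with `c ≠ 0` and all `a_j > 0` real.
In particular `P_M` has no factors of `z₁` or `z₂`. -/
theorem pure_stable_lowest_term_factorization (p : MvPolynomial (Fin 2) ℂ) (M : ℕ)
    (hstable : ∀ z : Fin 2 → ℂ, (∀ i, 0 < (z i).im) → MvPolynomial.eval z p ≠ 0)
    (hpure : ∀ r : MvPolynomial (Fin 2) ℂ,
      r ∣ p → r ∣ MvPolynomial.map (starRingEnd ℂ) p → IsUnit r)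
    (hp0 : MvPolynomial.eval (0 : Fin 2 → ℂ) p = 0)
    (hM : MvPolynomial.homogeneousComponent M p ≠ 0)
    (hMmin : ∀ j < M, MvPolynomial.homogeneousComponent j p = 0) :
    ∃ c : ℂ, c ≠ 0 ∧ ∃ a : Fin M → ℝ, (∀ j, 0 < a j) ∧
      MvPolynomial.homogeneousComponent M p =
        MvPolynomial.C c *
          ∏ j, (MvPolynomial.X 1 + MvPolynomial.C ((a j : ℝ) : ℂ) * MvPolynomial.X 0) := by
  classical
  -- support lives in degrees ≥ M
  have hlow : ∀ d ∈ p.support, M ≤ d 0 + d 1 := by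
    intro d hd
    by_contra hcon
    push_neg at hcon
    have h0 := hMmin (d 0 + d 1) hcon
    have h1 : MvPolynomial.coeff d (MvPolynomial.homogeneousComponent (d 0 + d 1) p)
        = MvPolynomial.coeff d p := by
      rw [MvPolynomial.coeff_homogeneousComponent, if_pos (fin2_degree d)]
    rw [h0, MvPolynomial.coeff_zero] at h1
    exact (MvPolynomial.mem_support_iff.mp hd) h1.symm
  have hMwit : ∃ d ∈ p.support, d 0 + d 1 = M := by
    by_contra hcon
    push_neg at hcon
    apply hM
    rw [MvPolynomial.homogeneousComponent_apply]
    apply Finset.sum_eq_zero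
    intro d hd
    rw [Finset.mem_filter] at hd
    exact absurd ((fin2_degree d) ▸ hd.2) (hcon d hd.1)
  -- purity excludes factors X 0 and X 1
  have hXdvd : ∀ i : Fin 2, ¬ (MvPolynomial.X i ∣ p) := by
    intro i hdvd
    apply not_isUnit_X i
    apply hpure _ hdvd
    obtain ⟨q, hq⟩ := hdvd
    exact ⟨MvPolynomial.map (starRingEnd ℂ) q, by rw [hq, map_mul, MvPolynomial.map_X]⟩
  have hax1 : ∃ d ∈ p.support, d 1 = 0 := by
    by_contra hcon
    push_neg at hcon
    exact hXdvd 1 (X_dvd_of_support hcon)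
  have hax0 : ∃ d ∈ p.support, d 0 = 0 := by
    by_contra hcon
    push_neg at hcon
    exact hXdvd 0 (X_dvd_of_support hcon)
  have haxis0 : (Finsupp.single (0 : Fin 2) M) ∈ p.support :=
    helperA p M hstable hlow hMwit hax1
  -- the swapped polynomial
  have haxis1 : (Finsupp.single (1 : Fin 2) M) ∈ p.support := by
    set σ : Fin 2 ≃ Fin 2 := Equiv.swap 0 1 with hσ
    set p' := MvPolynomial.rename (⇑σ) p with hp'
    have hswap_apply : ∀ (d : Fin 2 →₀ ℕ) (j : Fin 2),
        (Finsupp.mapDomain (⇑σ) d) j = d (σ j) := by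
      intro d j
      rw [Finsupp.mapDomain_equiv_apply]
      rw [hσ, Equiv.symm_swap]
    have hsupp' : p'.support = p.support.image (Finsupp.mapDomain (⇑σ)) :=
      MvPolynomial.support_rename_of_injective σ.injective
    have hmem' : ∀ d ∈ p.support, Finsupp.mapDomain (⇑σ) d ∈ p'.support := by
      intro d hd
      rw [hsupp']
      exact Finset.mem_image_of_mem _ hd
    have hstable' : ∀ z : Fin 2 → ℂ, (∀ i, 0 < (z i).im) → MvPolynomial.eval z p' ≠ 0 := by
      intro z hz
      rw [hp', MvPolynomial.eval_rename]
      apply hstable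
      intro i
      exact hz (σ i)
    have hlow' : ∀ d ∈ p'.support, M ≤ d 0 + d 1 := by
      intro d hd
      rw [hsupp'] at hd
      obtain ⟨d₀, hd₀, rfl⟩ := Finset.mem_image.mp hd
      rw [hswap_apply, hswap_apply, hσ]
      rw [Equiv.swap_apply_left, Equiv.swap_apply_right]
      have := hlow d₀ hd₀
      omega
    have hMwit' : ∃ d ∈ p'.support, d 0 + d 1 = M := by
      obtain ⟨d, hd, hds⟩ := hMwit
      refine ⟨Finsupp.mapDomain (⇑σ) d, hmem' d hd, ?_⟩
      rw [hswap_apply, hswap_apply, hσ, Equiv.swap_apply_left, Equiv.swap_apply_right]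
      omega
    have hax1' : ∃ d ∈ p'.support, d 1 = 0 := by
      obtain ⟨d, hd, hd0⟩ := hax0
      refine ⟨Finsupp.mapDomain (⇑σ) d, hmem' d hd, ?_⟩
      rw [hswap_apply, hσ, Equiv.swap_apply_right]
      exact hd0
    have haxis0' := helperA p' M hstable' hlow' hMwit' hax1'
    rw [hsupp'] at haxis0'
    obtain ⟨d, hd, hdeq⟩ := Finset.mem_image.mp haxis0'
    have hd_eq : d = Finsupp.single (1 : Fin 2) M := by
      have h1 := congrArg (Finsupp.mapDomain (⇑σ)) hdeq
      rw [← Finsupp.mapDomain_comp] at h1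
      have h2 : Finsupp.mapDomain (⇑σ ∘ ⇑σ) d = d := by
        rw [show (⇑σ ∘ ⇑σ) = id from funext fun x => by
          simp [hσ, Equiv.swap_apply_self], Finsupp.mapDomain_id]
      rw [h2] at h1
      rw [h1, Finsupp.mapDomain_single, hσ, Equiv.swap_apply_left]
    rwa [hd_eq] at hd
  have hc0 : MvPolynomial.coeff (Finsupp.single (0:Fin 2) M) p ≠ 0 :=
    MvPolynomial.mem_support_iff.mp haxis0
  have hcM : MvPolynomial.coeff (Finsupp.single (1:Fin 2) M) p ≠ 0 :=
    MvPolynomial.mem_support_iff.mp haxis1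
  -- the edge polynomial with slope 1
  set e1 := edgePoly p 1 (M:ℝ) with he1
  have hs0M1 : ((Finsupp.single (0:Fin 2) M) 1) = 0 := Finsupp.single_eq_of_ne (by decide)
  have hs0M0 : ((Finsupp.single (0:Fin 2) M) 0) = M := Finsupp.single_eq_same
  have hs1M1 : ((Finsupp.single (1:Fin 2) M) 1) = M := Finsupp.single_eq_same
  have hs1M0 : ((Finsupp.single (1:Fin 2) M) 0) = 0 := Finsupp.single_eq_of_ne (by decide)
  have hcond0 : (((Finsupp.single (0:Fin 2) M) 0 : ℕ) : ℝ)
      + 1 * (((Finsupp.single (0:Fin 2) M) 1 : ℕ) : ℝ) = (M:ℝ) := by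
    rw [hs0M0, hs0M1]; push_cast; ring
  have hcond1 : (((Finsupp.single (1:Fin 2) M) 0 : ℕ) : ℝ)
      + 1 * (((Finsupp.single (1:Fin 2) M) 1 : ℕ) : ℝ) = (M:ℝ) := by
    rw [hs1M0, hs1M1]; push_cast; ring
  have he1c0 : e1.coeff 0 = MvPolynomial.coeff (Finsupp.single (0:Fin 2) M) p := by
    have := edgePoly_coeff_of_mem haxis0 hcond0
    rwa [hs0M1] at this
  have he1cM : e1.coeff M = MvPolynomial.coeff (Finsupp.single (1:Fin 2) M) p := by
    have := edgePoly_coeff_of_mem haxis1 hcond1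
    rwa [hs1M1] at this
  have hcne : e1.coeff M ≠ 0 := by rw [he1cM]; exact hcM
  have hc0ne : e1.coeff 0 ≠ 0 := by rw [he1c0]; exact hc0
  have hndeg : e1.natDegree = M := by
    apply le_antisymm
    · rw [he1, edgePoly]
      apply Polynomial.natDegree_sum_le_of_forall_le
      intro d hd
      apply le_trans (Polynomial.natDegree_C_mul_le _ _)
      rw [Polynomial.natDegree_X_pow]
      rw [Finset.mem_filter] at hd
      have := hd.2
      have h1 : ((d 1 : ℕ) : ℝ) ≤ (M:ℝ) := by
        have h2 : ((d 0 : ℕ) : ℝ) ≥ 0 := Nat.cast_nonneg _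
        linarith
      exact_mod_cast h1
    · exact Polynomial.le_natDegree_of_ne_zero hcne
  have hsuppR : ∀ d ∈ p.support, (M:ℝ) ≤ (d 0 : ℝ) + 1 * (d 1 : ℝ) := by
    intro d hd
    have := hlow d hd
    have h1 : ((M:ℕ):ℝ) ≤ ((d 0 + d 1 : ℕ) : ℝ) := Nat.cast_le.mpr this
    push_cast at h1
    linarith
  have hroots_neg : ∀ rt ∈ e1.roots, rt.re < 0 ∧ rt.im = 0 := by
    intro rt hrt
    have hrt0 : e1.eval rt = 0 := (Polynomial.mem_roots'.mp hrt).2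
    have hne : e1 ≠ 0 := (Polynomial.mem_roots'.mp hrt).1
    have hrtne : rt ≠ 0 := by
      intro h
      rw [h, ← Polynomial.coeff_zero_eq_eval_zero] at hrt0
      exact hc0ne hrt0
    rw [← Complex.arg_eq_pi_iff]
    by_contra hcon
    exact master_root p hstable 1 (M:ℝ) le_rfl hsuppR rt hrtne
      (Or.inl (lt_of_le_of_ne (Complex.arg_le_pi rt) hcon)) hrt0 hne
  -- factor e1
  have hsplits : Polynomial.Splits e1 := IsAlgClosed.splits e1
  have hcard : Multiset.card e1.roots = M := by
    have := hsplits.natDegree_eq_card_roots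
    rw [← this, hndeg]
  have hfac := hsplits.eq_prod_roots
  have hlc : e1.leadingCoeff = e1.coeff M := by
    rw [Polynomial.leadingCoeff, hndeg]
  set c := e1.coeff M with hcdef
  set L := e1.roots.toList with hLdef
  have hLlen : L.length = M := by rw [hLdef, Multiset.length_toList, hcard]
  set a : Fin M → ℝ := fun j => -((L.get (Fin.cast hLlen.symm j)).re) with hadef
  have hLmem : ∀ j : Fin M, L.get (Fin.cast hLlen.symm j) ∈ e1.roots := by
    intro j
    rw [← Multiset.mem_toList, ← hLdef]
    exact List.get_mem L _
  have hapos : ∀ j, 0 < a j := by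
    intro j
    have := (hroots_neg _ (hLmem j)).1
    rw [hadef]
    simp only
    linarith
  have hLval : ∀ j : Fin M, L.get (Fin.cast hLlen.symm j) = -((a j : ℝ) : ℂ) := by
    intro j
    have h1 := hroots_neg _ (hLmem j)
    apply Complex.ext
    · rw [hadef]; simp
    · rw [h1.2]; simp
  -- product formula
  have hprod : ∀ f : ℂ → ℂ, (e1.roots.map f).prod
      = ∏ j : Fin M, f (L.get (Fin.cast hLlen.symm j)) := by
    intro f
    conv_lhs => rw [← Multiset.coe_toList e1.roots, ← hLdef]
    rw [show ((L : Multiset ℂ).map f) = ((L.map f : List ℂ) : Multiset ℂ) from rfl]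
    rw [Multiset.prod_coe]
    conv_lhs => rw [← List.ofFn_get L, List.map_ofFn, List.prod_ofFn]
    exact (Fin.prod_congr' _ hLlen.symm).symm
  have he1eval : ∀ w : ℂ, e1.eval w = c * ∏ j : Fin M, (w + ((a j : ℝ) : ℂ)) := by
    intro w
    conv_lhs => rw [hfac]
    rw [Polynomial.eval_mul, Polynomial.eval_C, hlc, Polynomial.eval_multiset_prod,
      Multiset.map_map]
    congr 1
    rw [show (Polynomial.eval w ∘ fun a => Polynomial.X - Polynomial.C a) = fun rt => w - rt from
      funext fun rt => by simp]
    rw [hprod (fun rt => w - rt)]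
    apply Finset.prod_congr rfl
    intro j _
    rw [hLval j, sub_neg_eq_add]
  -- evaluation of the homogeneous component
  have hiff : ∀ d : Fin 2 →₀ ℕ, (d.degree = M) ↔ ((d 0 : ℝ) + 1 * (d 1 : ℝ) = (M:ℝ)) := by
    intro d
    rw [fin2_degree, one_mul]
    constructor
    · intro h; exact_mod_cast congrArg (Nat.cast : ℕ → ℝ) h
    · intro h; exact_mod_cast h
  have hfilter : p.support.filter (fun d => d.degree = M)
      = p.support.filter (fun d => (d 0 : ℝ) + 1 * (d 1 : ℝ) = (M:ℝ)) :=
    Finset.filter_congr (fun d _ => by rw [hiff d])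
  have hhc_eval : ∀ z : Fin 2 → ℂ, MvPolynomial.eval z (MvPolynomial.homogeneousComponent M p)
      = ∑ d ∈ p.support.filter (fun d => (d 0 : ℝ) + 1 * (d 1 : ℝ) = (M:ℝ)),
          MvPolynomial.coeff d p * (z 0) ^ (d 0) * (z 1) ^ (d 1) := by
    intro z
    rw [MvPolynomial.homogeneousComponent_apply, map_sum, hfilter]
    apply Finset.sum_congr rfl
    intro d _
    rw [MvPolynomial.eval_monomial]
    rw [Finsupp.prod_fintype]
    · rw [Fin.prod_univ_two, mul_assoc]
    · intro i; exact pow_zero _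
  refine ⟨c, hcne, a, hapos, ?_⟩
  apply MvPolynomial.funext
  intro z
  rw [hhc_eval z]
  rw [show MvPolynomial.eval z (MvPolynomial.C c *
      ∏ j : Fin M, (MvPolynomial.X 1 + MvPolynomial.C ((a j : ℝ) : ℂ) * MvPolynomial.X 0))
      = c * ∏ j : Fin M, (z 1 + ((a j : ℝ) : ℂ) * z 0) from by
    rw [map_mul, MvPolynomial.eval_C, map_prod]
    congr 1
    apply Finset.prod_congr rfl
    intro j _
    simp]
  by_cases hz0 : z 0 = 0
  · rw [Finset.sum_eq_single (Finsupp.single (1:Fin 2) M)]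
    · rw [hs1M0, hs1M1, pow_zero, mul_one, ← he1cM]
      simp only [hz0, mul_zero, add_zero]
      rw [Finset.prod_const, Finset.card_univ, Fintype.card_fin]
    · intro b hb hbne
      rw [Finset.mem_filter] at hb
      have hb0 : b 0 ≠ 0 := by
        intro h
        apply hbne
        apply fin2_finsupp_eq
        · rw [h, hs1M0]
        · have := hb.2
          rw [h] at this
          have h2 : ((b 1 : ℕ) : ℝ) = (M:ℝ) := by push_cast at this ⊢; linarith
          rw [hs1M1]
          exact_mod_cast h2
      rw [hz0, zero_pow hb0, mul_zero, zero_mul]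
    · intro hni
      exact absurd (Finset.mem_filter.mpr ⟨haxis1, hcond1⟩) hni
  · have hstep1 : ∑ d ∈ p.support.filter (fun d => (d 0 : ℝ) + 1 * (d 1 : ℝ) = (M:ℝ)),
        MvPolynomial.coeff d p * (z 0) ^ (d 0) * (z 1) ^ (d 1)
        = (z 0) ^ M * e1.eval (z 1 / z 0) := by
      rw [he1, edgePoly_eval, Finset.mul_sum]
      apply Finset.sum_congr rfl
      intro d hd
      rw [Finset.mem_filter] at hd
      have hdsum : d 0 + d 1 = M := by
        have := hd.2
        rw [one_mul] at this
        exact_mod_cast this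
      rw [div_pow]
      rw [show (z 0) ^ M = (z 0) ^ (d 0) * (z 0) ^ (d 1) from by rw [← pow_add, hdsum]]
      field_simp
    rw [hstep1, he1eval]
    have hfj : ∀ j : Fin M, z 1 / z 0 + ((a j : ℝ) : ℂ)
        = (z 1 + ((a j : ℝ) : ℂ) * z 0) / (z 0) := fun j => by field_simp
    simp only [hfj]
    rw [Finset.prod_div_distrib, Finset.prod_const, Finset.card_univ, Fintype.card_fin]
    field_simp
    exact Finset.prod_congr rfl fun j _ => by ring
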